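/- Let m ≥ 2 be an integer and σ ≥ 2 a real number. Then (m^σ/log m) · Σ_{n=m+1}^∞ (log n)/n^σ ≤ 2·(1 + 8m/σ)·(1 + 1/m)^{-σ}. -/

import Mathlib

set_option maxHeartbeats 1000000

open Filter Set MeasureTheory

theorem stmt0 (m : ℕ) (hm : 2 ≤ m) (σ : ℝ) (hσ : 2 ≤ σ) :
    (m : ℝ) ^ σ / Real.log m * ∑' n : ℕ, Real.log (n + m + 1) / ((n : ℝ) + m + 1) ^ σ ≤
      2 * (1 + 8 * m / σ) * (1 + 1 / m) ^ (-σ) := by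
  have hm2 : (2:ℝ) ≤ (m:ℝ) := by exact_mod_cast hm
  set c : ℝ := (m:ℝ) + 1 with hc
  have hc3 : (3:ℝ) ≤ c := by simp [hc]; linarith
  have hc0 : (0:ℝ) < c := by linarith
  have hm0 : (0:ℝ) < m := by linarith
  have hσ0 : (0:ℝ) < σ := by linarith
  have hσ1 : (0:ℝ) < σ - 1 := by linarith
  have hlm : 0 < Real.log m := Real.log_pos (by linarith)
  have hlog2 : (1:ℝ)/2 ≤ Real.log m := by
    have h2 := Real.log_two_gt_d9
    have := Real.log_le_log (by norm_num) hm2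
    linarith
  set K : ℝ := ((σ-1)^2)⁻¹ with hK
  set g : ℝ → ℝ := fun x => Real.log x * x ^ (-σ) with hg
  set F : ℝ → ℝ := fun x => -(x ^ (1-σ) * (Real.log x / (σ-1) + K)) with hF
  -- log x ≥ log 2 > 1/2 for x ≥ 2
  have hlogx : ∀ x : ℝ, 2 ≤ x → (1:ℝ)/2 ≤ Real.log x := by
    intro x hx
    have h2 := Real.log_two_gt_d9
    have := Real.log_le_log (by norm_num) hx
    linarith
  -- F' = g on [c, ∞)
  have hderiv : ∀ x ∈ Set.Ici c, HasDerivAt F (g x) x := by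
    intro x hx
    have hx0 : (0:ℝ) < x := lt_of_lt_of_le hc0 hx
    have h1 : HasDerivAt (fun y : ℝ => y ^ (1-σ)) ((1-σ) * x ^ (-σ)) x := by
      have := Real.hasDerivAt_rpow_const (x := x) (p := 1-σ) (Or.inl hx0.ne')
      rwa [show (1-σ) - 1 = -σ by ring] at this
    have h2 : HasDerivAt (fun y : ℝ => Real.log y / (σ-1) + K) (x⁻¹ / (σ-1)) x :=
      ((Real.hasDerivAt_log hx0.ne').div_const _).add_const _
    have h3 := (h1.mul h2).neg
    convert h3 using 1
    · rfl
    · rfl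
    · rfl
    have hxσ : x ^ (1-σ) = x ^ (-σ) * x := by
      rw [← Real.rpow_add_one hx0.ne' (-σ)]; ring_nf
    rw [hxσ, hg, hK]
    field_simp
    ring
  -- g ≥ 0 on [c, ∞)
  have hgpos : ∀ x ∈ Set.Ioi c, 0 ≤ g x := by
    intro x hx
    have hx1 : (1:ℝ) ≤ x := by have := hx.out; linarith
    have : 0 ≤ Real.log x := Real.log_nonneg hx1
    have : 0 ≤ x ^ (-σ) := Real.rpow_nonneg (by linarith) _
    positivity
  -- F → 0 at infinity
  have TF : Tendsto F atTop (nhds 0) := by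
    have T1 : Tendsto (fun x : ℝ => Real.log x / x ^ (σ-1)) atTop (nhds 0) :=
      (isLittleO_log_rpow_atTop hσ1).tendsto_div_nhds_zero
    have T2 : Tendsto (fun x : ℝ => x ^ (-(σ-1))) atTop (nhds 0) :=
      tendsto_rpow_neg_atTop hσ1
    have T3 := ((T1.div_const (σ-1)).add (T2.mul_const K)).neg
    have heq : ∀ᶠ x in atTop, -(Real.log x / x ^ (σ-1) / (σ-1) + x ^ (-(σ-1)) * K) = F x := by
      filter_upwards [eventually_gt_atTop (0:ℝ)] with x hx
      have h1 : x ^ ((1:ℝ)-σ) = (x ^ (σ-1))⁻¹ := by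
        rw [show (1:ℝ)-σ = -(σ-1) by ring, Real.rpow_neg hx.le]
      have h2 : x ^ (-(σ-1)) = (x ^ (σ-1))⁻¹ := Real.rpow_neg hx.le _
      rw [hF]
      simp only [h1, h2]
      ring
    have := T3.congr' heq
    simpa using this
  -- integral value and integrability
  have hInt : IntegrableOn g (Set.Ioi c) :=
    integrableOn_Ioi_deriv_of_nonneg' hderiv hgpos TF
  have hIoiVal : ∫ x in Set.Ioi c, g x = 0 - F c :=
    integral_Ioi_of_hasDerivAt_of_nonneg' hderiv hgpos TF
  have hIntNonneg : 0 ≤ ∫ x in Set.Ioi c, g x :=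
    setIntegral_nonneg measurableSet_Ioi hgpos
  -- antitone
  have hanti : AntitoneOn g (Set.Ici c) := by
    apply antitoneOn_of_deriv_nonpos (convex_Ici c)
    · intro x hx
      have hx0 : (0:ℝ) < x := lt_of_lt_of_le hc0 hx
      exact ((Real.continuousAt_log hx0.ne').mul
        (Real.continuousAt_rpow_const x _ (Or.inl hx0.ne'))).continuousWithinAt
    · intro x hx
      rw [interior_Ici] at hx
      have hx0 : (0:ℝ) < x := lt_trans hc0 hx
      exact (((Real.hasDerivAt_log hx0.ne').mul
        (Real.hasDerivAt_rpow_const (Or.inl hx0.ne')))).differentiableAt.differentiableWithinAt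
    · intro x hx
      rw [interior_Ici] at hx
      have hx0 : (0:ℝ) < x := lt_trans hc0 hx
      have hd := (Real.hasDerivAt_log hx0.ne').mul
        (Real.hasDerivAt_rpow_const (x := x) (p := -σ) (Or.inl hx0.ne'))
      rw [show deriv g x = _ from hd.deriv]
      have hr : x ^ (-σ - 1) = x ^ (-σ) / x := Real.rpow_sub_one hx0.ne' _
      have hkey : x⁻¹ * x ^ (-σ) + Real.log x * (-σ * x ^ (-σ - 1))
          = (x ^ (-σ) / x) * (1 - σ * Real.log x) := by rw [hr]; ring
      rw [hkey]
      apply mul_nonpos_of_nonneg_of_nonpos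
      · positivity
      · have hlx : (1:ℝ)/2 ≤ Real.log x := hlogx x (by linarith [hx.out])
        nlinarith
  -- the tsum bound
  set T : ℝ := ∑' n : ℕ, Real.log (n + m + 1) / ((n : ℝ) + m + 1) ^ σ with hT
  have hf0 : ∀ n : ℕ, 0 ≤ Real.log ((n:ℝ) + m + 1) / ((n : ℝ) + m + 1) ^ σ := by
    intro n
    have h1 : (1:ℝ) ≤ (n:ℝ) + m + 1 := by
      have hn : (0:ℝ) ≤ (n:ℝ) := Nat.cast_nonneg n
      linarith
    have := Real.log_nonneg h1
    positivity
  have hgc : g c = Real.log c / c ^ σ := by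
    rw [hg]; simp only []
    rw [Real.rpow_neg hc0.le, div_eq_mul_inv]
  have hterm : ∀ n : ℕ, Real.log ((n:ℝ) + m + 1) / ((n : ℝ) + m + 1) ^ σ = g ((n:ℝ) + m + 1) := by
    intro n
    have hp : (0:ℝ) < (n:ℝ) + m + 1 := by positivity
    rw [hg]; simp only []
    rw [Real.rpow_neg hp.le, div_eq_mul_inv]
  have key : T ≤ g c + ∫ x in Set.Ioi c, g x := by
    apply Real.tsum_le_of_sum_range_le hf0
    intro a
    match a with
    | 0 =>
      simp only [Finset.range_zero, Finset.sum_empty]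
      have : 0 ≤ g c := by
        rw [hgc]
        have := Real.log_nonneg (by linarith : (1:ℝ) ≤ c)
        positivity
      linarith
    | Nat.succ b =>
      rw [Finset.sum_range_succ']
      have h0 : Real.log ((0:ℕ) + (m:ℝ) + 1) / (((0:ℕ):ℝ) + m + 1) ^ σ = g c := by
        rw [hterm 0]; norm_num; rfl
      have hsum : ∑ i ∈ Finset.range b,
          Real.log ((↑(i+1):ℝ) + m + 1) / ((↑(i+1):ℝ) + m + 1) ^ σ
          ≤ ∫ x in Set.Ioi c, g x := by
        have hs : ∑ i ∈ Finset.range b,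
            Real.log ((↑(i+1):ℝ) + m + 1) / ((↑(i+1):ℝ) + m + 1) ^ σ
            = ∑ i ∈ Finset.range b, g (c + ((i+1:ℕ):ℝ)) := by
          apply Finset.sum_congr rfl
          intro i _
          rw [hterm (i+1)]
          congr 1
          push_cast
          ring
        rw [hs]
        have h1 : ∑ i ∈ Finset.range b, g (c + ((i+1:ℕ):ℝ)) ≤ ∫ x in c..c + b, g x :=
          AntitoneOn.sum_le_integral (hanti.mono (Set.Icc_subset_Ici_self))
        have h2 : ∫ x in c..c + b, g x ≤ ∫ x in Set.Ioi c, g x := by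
          rw [intervalIntegral.integral_of_le (by
            have hb : (0:ℝ) ≤ (b:ℝ) := Nat.cast_nonneg b
            linarith : c ≤ c + (b:ℝ))]
          apply setIntegral_mono_set hInt
          · filter_upwards [ae_restrict_mem measurableSet_Ioi] with x hx using hgpos x hx
          · exact (Set.Ioc_subset_Ioi_self).eventuallyLE
        linarith
      push_cast at hsum ⊢
      push_cast at h0
      linarith
  -- numeric endgame
  have hcσ : (0:ℝ) < c ^ σ := Real.rpow_pos_of_pos hc0 _
  have hmσ : (0:ℝ) < (m:ℝ) ^ σ := Real.rpow_pos_of_pos hm0 _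
  -- rewrite RHS
  have h1m : (1:ℝ) + 1/(m:ℝ) = c/m := by rw [hc]; field_simp
  have hrhs : ((1:ℝ) + 1/(m:ℝ)) ^ (-σ) = (m:ℝ)^σ / c^σ := by
    rw [h1m, Real.rpow_neg (by positivity), Real.div_rpow hc0.le hm0.le, inv_div]
  rw [hrhs]
  -- bound T and multiply
  have hB : T ≤ g c + (0 - F c) := by rw [← hIoiVal]; exact key
  have hBval : g c + (0 - F c) = Real.log c / c^σ + c ^ (1-σ) * (Real.log c / (σ-1) + K) := by
    rw [hgc, hF]; ring
  have hstep : (m:ℝ) ^ σ / Real.log m * T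
      ≤ (m:ℝ) ^ σ / Real.log m * (Real.log c / c^σ + c ^ (1-σ) * (Real.log c / (σ-1) + K)) := by
    apply mul_le_mul_of_nonneg_left _ (by positivity)
    rw [← hBval]; exact hB
  refine le_trans hstep ?_
  -- final inequality
  have hc2m : c ≤ 2 * m := by rw [hc]; linarith
  have hlogc0 : 0 ≤ Real.log c := Real.log_nonneg (by linarith)
  have A1 : Real.log c ≤ 2 * Real.log m := by
    have h : Real.log c ≤ Real.log ((m:ℝ) * m) := Real.log_le_log hc0 (by nlinarith)
    rw [Real.log_mul hm0.ne' hm0.ne'] at h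
    linarith
  have hσ2 : σ ≤ 2 * (σ - 1) := by linarith
  have A2 : c * Real.log c / (σ-1) ≤ 8 * m * Real.log m / σ := by
    rw [div_le_div_iff₀ hσ1 hσ0]
    have h4 : c * Real.log c ≤ 4 * m * Real.log m := by
      have := mul_le_mul hc2m A1 hlogc0 (by positivity : (0:ℝ) ≤ 2 * m)
      linarith
    have h5 := mul_le_mul_of_nonneg_right h4 hσ0.le
    have h6 := mul_le_mul_of_nonneg_left hσ2 (by positivity : (0:ℝ) ≤ 4 * (m:ℝ) * Real.log m)
    linarith
  have A3 : c / (σ-1)^2 ≤ 8 * m * Real.log m / σ := by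
    rw [div_le_div_iff₀ (by positivity) hσ0]
    have k1 : σ * σ ≤ 4 * (σ-1)^2 := by nlinarith
    have k2 : 4 * (σ-1)^2 ≤ 8 * Real.log m * (σ-1)^2 := by nlinarith [sq_nonneg (σ-1)]
    have k3 : 2*σ ≤ σ * σ := by nlinarith
    have k4 := mul_le_mul_of_nonneg_left ((k3.trans k1).trans k2) hm0.le
    have k5 := mul_le_mul_of_nonneg_right hc2m hσ0.le
    linarith
  -- reduce to that
  have hfact : c ^ (1-σ) = c / c^σ := by
    rw [show (1:ℝ)-σ = 1 + -σ by ring, Real.rpow_add hc0, Real.rpow_one,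
      Real.rpow_neg hc0.le, div_eq_mul_inv]
  rw [hfact]
  rw [div_mul_eq_mul_div, div_le_iff₀ hlm]
  have hexp : ((m:ℝ)^σ * (Real.log c / c^σ + c / c^σ * (Real.log c / (σ-1) + K)))
      = (m:ℝ)^σ / c^σ * (Real.log c + c * Real.log c / (σ-1) + c / (σ-1)^2) := by
    rw [hK]; field_simp; ring
  rw [hexp]
  have hR : 2 * (1 + 8 * (m:ℝ) / σ) * ((m:ℝ)^σ / c^σ) * Real.log m
      = (m:ℝ)^σ / c^σ * ((2 + 16 * m / σ) * Real.log m) := by ring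
  rw [hR]
  apply mul_le_mul_of_nonneg_left _ (by positivity)
  have : (2 + 16 * (m:ℝ) / σ) * Real.log m
      = 2 * Real.log m + 8 * m * Real.log m / σ + 8 * m * Real.log m / σ := by ring
  rw [this]
  linarith
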